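/- Let λ ∈ ℂ with Re(λ) ≥ 0, ξ ∈ ℝ with |ξ| + |λ| ≠ 0, α ∈ (0,π), b > 0. Suppose v ∈ C₀(ℝ₊;ℂ) solves λv + ξ²v - v'' = 0 on (0,∞) and σ ∈ ℂ satisfies -sin(α)² v'(0) + (λ + b sin(α) ξ²)σ = 0 and v(0) = σ. Then (v, σ) = (0, 0). -/

import Mathlib

open Real

lemma exists_mu (c : ℂ) (hre : 0 ≤ c.re) (hc : c ≠ 0) : ∃ μ : ℂ, μ ^ 2 = c ∧ 0 < μ.re := by
  have habs : 0 < ‖c‖ := norm_pos_iff.mpr hc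
  have hpos : 0 < c.re + ‖c‖ := by linarith
  set s : ℝ := Real.sqrt (2 * (c.re + ‖c‖)) with hs
  have hspos : 0 < s := Real.sqrt_pos.mpr (by linarith)
  have hssq : s ^ 2 = 2 * (c.re + ‖c‖) := Real.sq_sqrt (by linarith)
  refine ⟨(s⁻¹ : ℝ) * (c + (‖c‖ : ℂ)), ?_, ?_⟩
  · have key : (c + (‖c‖ : ℂ)) ^ 2 = c * (s : ℂ) ^ 2 := by
      have h1 : (c + (‖c‖ : ℂ)) ^ 2
          = c ^ 2 + 2 * (‖c‖ : ℂ) * c + ((‖c‖ : ℂ)) ^ 2 := by ring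
      have h2 : ((‖c‖ : ℂ)) ^ 2 = c * (starRingEnd ℂ) c := by
        rw [Complex.mul_conj]; norm_cast; exact Complex.sq_norm c
      have h3 : c + (starRingEnd ℂ) c = (2 * c.re : ℝ) := Complex.add_conj c
      have h4 : ((s : ℂ)) ^ 2 = ((2 * (c.re + ‖c‖) : ℝ) : ℂ) := by
        norm_cast
      rw [h1, h2, h4]
      have : (starRingEnd ℂ) c = (2 * c.re : ℝ) - c := by rw [← h3]; ring
      rw [this]
      push_cast
      ring
    have hsne : (s : ℂ) ≠ 0 := by exact_mod_cast hspos.ne'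
    field_simp
    rw [mul_comm] at key
    rw [key]
    push_cast; field_simp
  · have : ((s⁻¹ : ℝ) * (c + (‖c‖ : ℂ))).re = s⁻¹ * (c.re + ‖c‖) := by
      simp [Complex.ofReal_mul, Complex.mul_re, Complex.add_re, Complex.ofReal_re,
        Complex.ofReal_im]
    rw [this]
    positivity

lemma const_of_hasDerivAt_zero {f : ℝ → ℂ} (hf : ∀ x : ℝ, 0 ≤ x → HasDerivAt f 0 x) :
    ∀ y : ℝ, 0 ≤ y → f y = f 0 := by
  intro y hy
  refine constant_of_has_deriv_right_zero (f := f) (a := 0) (b := y) ?_ ?_ y ⟨hy, le_refl y⟩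
  · intro x hx
    exact ((hf x hx.1).continuousAt).continuousWithinAt
  · intro x hx
    exact (hf x hx.1).hasDerivWithinAt

lemma cexp_tendsto_zero {a : ℂ} (ha : a.re < 0) :
    Filter.Tendsto (fun y : ℝ => Complex.exp (a * y)) Filter.atTop (nhds 0) := by
  rw [tendsto_zero_iff_norm_tendsto_zero]
  have h : ∀ y : ℝ, ‖Complex.exp (a * y)‖ = Real.exp (-(-a.re * y)) := by
    intro y
    rw [Complex.norm_exp]
    congr 1
    simp [Complex.mul_re]
  simp only [h]
  apply Real.tendsto_exp_atBot.comp
  exact Filter.tendsto_neg_atBot_iff.mpr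
    (Filter.Tendsto.const_mul_atTop (by linarith) Filter.tendsto_id)

lemma hasDerivAt_cexp_mul (a : ℂ) (x : ℝ) :
    HasDerivAt (fun y : ℝ => Complex.exp (a * y)) (a * Complex.exp (a * x)) x := by
  have h0 : HasDerivAt (fun y : ℝ => a * (y : ℂ)) a x := by
    simpa using ((hasDerivAt_id x).ofReal_comp).const_mul a
  simpa [mul_comm] using h0.cexp

/-- A decaying solution of `λ v + ξ² v - v'' = 0` on `(0,∞)` with the dynamic boundary
condition `-sin(α)² v'(0) + (λ + b sin α ξ²) σ = 0` and `v(0) = σ` is trivial. -/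
theorem stmt8 (l : ℂ) (ξ : ℝ) (α b : ℝ) (σ : ℂ) (v : ℝ → ℂ)
    (hlre : 0 ≤ l.re) (hne : |ξ| + ‖l‖ ≠ 0)
    (hα : α ∈ Set.Ioo 0 π) (hb : 0 < b)
    (hsmooth : ContDiff ℝ 2 v)
    (hdecay : Filter.Tendsto v Filter.atTop (nhds 0))
    (hode : ∀ y : ℝ, 0 < y →
      l * v y + (ξ : ℂ) ^ 2 * v y - deriv^[2] v y = 0)
    (hbc : -((Real.sin α : ℂ) ^ 2) * deriv v 0
        + (l + (b : ℂ) * (Real.sin α : ℂ) * (ξ : ℂ) ^ 2) * σ = 0)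
    (hv0 : v 0 = σ) :
    (∀ y : ℝ, 0 ≤ y → v y = 0) ∧ σ = 0 := by
  obtain ⟨hα0, hαπ⟩ := hα
  have hsin : 0 < Real.sin α := Real.sin_pos_of_pos_of_lt_pi hα0 hαπ
  set c : ℂ := l + (ξ : ℂ) ^ 2 with hcdef
  have hcre' : c.re = l.re + ξ ^ 2 := by
    simp [hcdef]
    norm_cast
  have hcre : 0 ≤ c.re := by rw [hcre']; positivity
  have hc0 : c ≠ 0 := by
    intro h
    have hre0 : l.re + ξ ^ 2 = 0 := by rw [← hcre']; rw [h]; simp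
    have hξ : ξ = 0 := by nlinarith [sq_nonneg ξ]
    have hlre0 : l.re = 0 := by nlinarith
    have him : c.im = l.im := by simp [hcdef]; norm_cast
    have hlim : l.im = 0 := by rw [← him, h]; simp
    have : l = 0 := Complex.ext hlre0 hlim
    rw [this, hξ] at hne
    simp at hne
  obtain ⟨μ, hμsq, hμre⟩ := exists_mu c hcre hc0
  have hμ0 : μ ≠ 0 := by
    intro h; rw [h] at hμre; simp at hμre
  -- smoothness facts
  have hd1 : Differentiable ℝ v := hsmooth.differentiable (by norm_num)
  have h21 : ContDiff ℝ 1 (deriv v) := by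
    have : ContDiff ℝ (1 + 1) v := by exact_mod_cast hsmooth
    exact (contDiff_succ_iff_deriv.mp this).2.2
  have hd2 : Differentiable ℝ (deriv v) := h21.differentiable (by norm_num)
  have hcont2 : Continuous (deriv (deriv v)) := h21.continuous_deriv le_rfl
  -- ODE on [0,∞)
  have hodeI : ∀ y : ℝ, 0 ≤ y → deriv (deriv v) y = c * v y := by
    have heq : Set.EqOn (deriv (deriv v)) (fun y => c * v y) (Set.Ioi 0) := by
      intro y hy
      have h1 := hode y hy
      have h2 : deriv^[2] v y = deriv (deriv v) y := rfl
      rw [h2] at h1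
      simp only [hcdef]
      linear_combination -h1
    have hcl := heq.closure hcont2 (continuous_const.mul hd1.continuous)
    rw [closure_Ioi] at hcl
    exact fun y hy => hcl hy
  -- the function u = v' - μ v satisfies e^{μy} u = u 0 on [0,∞)
  set u0 : ℂ := deriv v 0 - μ * v 0 with hu0def
  have hkey1 : ∀ x : ℝ, 0 ≤ x →
      Complex.exp (μ * x) * (deriv v x - μ * v x) = u0 := by
    have hC := const_of_hasDerivAt_zero
      (f := fun y : ℝ => Complex.exp (μ * y) * (deriv v y - μ * v y)) ?_
    · intro x hx
      have := hC x hx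
      simpa [hu0def] using this
    · intro x hx
      have hd : HasDerivAt (fun y : ℝ => Complex.exp (μ * y) * (deriv v y - μ * v y))
          (μ * Complex.exp (μ * x) * (deriv v x - μ * v x)
            + Complex.exp (μ * x) * (deriv (deriv v) x - μ * deriv v x)) x :=
        (hasDerivAt_cexp_mul μ x).mul
          (((hd2 x).hasDerivAt).sub (((hd1 x).hasDerivAt).const_mul μ))
      have hz : μ * Complex.exp (μ * x) * (deriv v x - μ * v x)
            + Complex.exp (μ * x) * (deriv (deriv v) x - μ * deriv v x) = 0 := by
        rw [hodeI x hx, ← hμsq]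
        ring
      rwa [hz] at hd
  -- the function G is constant on [0,∞)
  set G : ℝ → ℂ := fun y => Complex.exp (-μ * y) * v y
      + u0 / (2 * μ) * Complex.exp (-(2 * μ) * y) with hGdef
  have hGconst : ∀ y : ℝ, 0 ≤ y → G y = G 0 := by
    apply const_of_hasDerivAt_zero
    intro x hx
    have hd : HasDerivAt G
        ((-μ * Complex.exp (-μ * x) * v x + Complex.exp (-μ * x) * deriv v x)
          + u0 / (2 * μ) * (-(2 * μ) * Complex.exp (-(2 * μ) * x))) x :=
      ((hasDerivAt_cexp_mul (-μ) x).mul ((hd1 x).hasDerivAt)).add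
        (((hasDerivAt_cexp_mul (-(2 * μ)) x).const_mul (u0 / (2 * μ))))
    have e1 : Complex.exp (-(2 * μ) * x) * Complex.exp (μ * x) = Complex.exp (-μ * x) := by
      rw [← Complex.exp_add]; congr 1; ring
    have e2 : Complex.exp (-μ * x) * (deriv v x - μ * v x)
        = Complex.exp (-(2 * μ) * x) * u0 := by
      rw [← hkey1 x hx, ← e1]; ring
    have hz : (-μ * Complex.exp (-μ * x) * v x + Complex.exp (-μ * x) * deriv v x)
          + u0 / (2 * μ) * (-(2 * μ) * Complex.exp (-(2 * μ) * x)) = 0 := by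
      have h2 : u0 / (2 * μ) * (-(2 * μ)) = -u0 := by field_simp
      linear_combination e2 + Complex.exp (-(2 * μ) * (x : ℂ)) * h2
    rwa [hz] at hd
  -- the constant is zero
  have hG0 : G 0 = 0 := by
    have hlim : Filter.Tendsto G Filter.atTop (nhds 0) := by
      have t1 : Filter.Tendsto (fun y : ℝ => Complex.exp (-μ * y) * v y)
          Filter.atTop (nhds 0) := by
        simpa using (cexp_tendsto_zero (a := -μ) (by simpa using hμre)).mul hdecay
      have t2 : Filter.Tendsto (fun y : ℝ => u0 / (2 * μ) * Complex.exp (-(2 * μ) * y))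
          Filter.atTop (nhds 0) := by
        have : (-(2 * μ)).re < 0 := by simp [Complex.mul_re]; linarith
        simpa using (tendsto_const_nhds (x := u0 / (2 * μ))).mul (cexp_tendsto_zero this)
      simpa [hGdef] using t1.add t2
    have hlim2 : Filter.Tendsto G Filter.atTop (nhds (G 0)) := by
      apply Filter.Tendsto.congr' _ tendsto_const_nhds
      filter_upwards [Filter.eventually_ge_atTop (0 : ℝ)] with y hy
      exact (hGconst y hy).symm
    exact tendsto_nhds_unique hlim2 hlim
  have hG0' : v 0 + u0 / (2 * μ) = 0 := by
    have : G 0 = v 0 + u0 / (2 * μ) := by simp [hGdef]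
    rw [← this, hG0]
  -- compute v'(0)
  have hv'0 : deriv v 0 = -μ * v 0 := by
    have h : v 0 * (2 * μ) + u0 = 0 := by
      field_simp at hG0'
      linear_combination hG0'
    rw [hu0def] at h
    linear_combination h
  -- the boundary condition forces σ = 0
  have hσ : σ = 0 := by
    have hfac : ((Real.sin α : ℂ) ^ 2 * μ
        + (l + (b : ℂ) * (Real.sin α : ℂ) * (ξ : ℂ) ^ 2)) ≠ 0 := by
      intro h
      have hre : ((Real.sin α : ℂ) ^ 2 * μ
          + (l + (b : ℂ) * (Real.sin α : ℂ) * (ξ : ℂ) ^ 2)).re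
          = Real.sin α ^ 2 * μ.re + (l.re + b * Real.sin α * ξ ^ 2) := by
        have e3 : (b : ℂ) * (Real.sin α : ℂ) * (ξ : ℂ) ^ 2
            = ((b * Real.sin α * ξ ^ 2 : ℝ) : ℂ) := by push_cast; ring
        rw [e3, Complex.add_re, Complex.add_re, ← Complex.ofReal_pow,
          Complex.re_ofReal_mul, Complex.ofReal_re]
      rw [h] at hre
      simp at hre
      nlinarith [mul_pos (pow_pos hsin 2) hμre,
        mul_nonneg (mul_nonneg hb.le hsin.le) (sq_nonneg ξ)]
    have hv'0σ : deriv v 0 = -μ * σ := by rw [hv'0, hv0]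
    have hzero : ((Real.sin α : ℂ) ^ 2 * μ
        + (l + (b : ℂ) * (Real.sin α : ℂ) * (ξ : ℂ) ^ 2)) * σ = 0 := by
      linear_combination hbc + (Real.sin α : ℂ) ^ 2 * hv'0σ
    exact (mul_eq_zero.mp hzero).resolve_left hfac
  have hv00 : v 0 = 0 := by rw [hv0, hσ]
  have hu00 : u0 = 0 := by rw [hu0def, hv'0, hv00]; ring
  refine ⟨?_, hσ⟩
  intro y hy
  have hGy := hGconst y hy
  rw [hG0] at hGy
  rw [hGdef] at hGy
  simp only [hu00, zero_div, zero_mul, add_zero] at hGy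
  rcases mul_eq_zero.mp hGy with h | h
  · exact absurd h (Complex.exp_ne_zero _)
  · exact h
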